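/- Let 1 ≤ q₁ < q and p ≥ q + 2. Let λ_{11} ≥ ... ≥ λ_{1q₁} > 0 with s_j := λ_{1j}/(1 + λ_{1j}), let μ_1 ≥ ... ≥ μ_{q₁} ≥ 0 and μ_{q₁+1} ≥ ... ≥ μ_q > 0 be constants, and let C_n = n^{−α} with 0 < α < 1/2. For each n let λ̂_1(n), ..., λ̂_p(n) ≥ 0 satisfy, for a constant K and ρ_n := max{C_n², n^{−1/2}}: |λ̂_i(n) − λ_{1i} − C_n·μ_i| ≤ K·ρ_n for 1 ≤ i ≤ q₁; |λ̂_i(n) − C_n·μ_i| ≤ K·ρ_n for q₁ < i ≤ q; and |λ̂_i(n)| ≤ K·ρ_n for q < i ≤ p. Let c₁(n) > 0 with c₁(n)/C_n² → 0, n·c₁(n) → ∞ and c₁(n)/C_n⁴ → ∞. Define ŝ_j(n) = λ̂_j(n)/(1 + λ̂_j(n)) and ŝ*_j(n) = (ŝ_j(n)² + c₁(n))/(ŝ_{j+1}(n)² + c₁(n)) − 1. Then as n → ∞: (i) for 1 ≤ j ≤ q₁ − 1, ŝ*_j(n) → s_j²/s_{j+1}² − 1; (ii) ŝ*_{q₁}(n)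 → +∞; (iii) for q₁ + 1 ≤ j ≤ q − 1, ŝ*_j(n) → μ_j²/μ_{j+1}² − 1; (iv) ŝ*_q(n) → +∞; (v) for q + 1 ≤ j ≤ p − 1, ŝ*_j(n) → 0. -/

import Mathlib

open Filter

/-- `ŝ_j = λ̂_j / (1 + λ̂_j)`. -/
noncomputable def sHat (lam : ℕ → ℝ) (j : ℕ) : ℝ := lam j / (1 + lam j)

/-- First-round ridge ratio `ŝ*_j = (ŝ_j² + c₁)/(ŝ_{j+1}² + c₁) − 1`. -/
noncomputable def sStar (lam : ℕ → ℝ) (c1 : ℝ) (j : ℕ) : ℝ :=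
  ((sHat lam j) ^ 2 + c1) / ((sHat lam (j + 1)) ^ 2 + c1) - 1

/-- Local drift rate `C_n = n^{−α}`. -/
noncomputable def Cseq (α : ℝ) (n : ℕ) : ℝ := (n : ℝ) ^ (-α)

/-- Remainder rate `ρ_n = max{C_n², n^{−1/2}}`. -/
noncomputable def rhoSeq (α : ℝ) (n : ℕ) : ℝ := max ((Cseq α n) ^ 2) (1 / Real.sqrt n)

lemma tendsto_of_abs_sub_le' {f g h : ℕ → ℝ} {l : ℝ}
    (hfg : ∀ᶠ n in atTop, |f n - g n| ≤ h n)
    (hh : Tendsto h atTop (nhds 0)) (hg : Tendsto g atTop (nhds l)) :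
    Tendsto f atTop (nhds l) := by
  have h0 : Tendsto (fun n => f n - g n) atTop (nhds 0) :=
    squeeze_zero_norm' (by simpa [Real.norm_eq_abs] using hfg) hh
  simpa using h0.add hg

lemma div_div_div_same' {a b c : ℝ} (hb : b ≠ 0) (hc : c ≠ 0) :
    (a / c) / (b / c) = a / b := by
  field_simp

/-- Limits of the first-round ridge ratios under local alternative models drifting at rate
`C_n = n^{−α}`, `0 < α < 1/2`, using a ridge `c₁` with `c₁(n)/C_n² → 0`, `n·c₁(n) → ∞`,
`c₁(n)/C_n⁴ → ∞`:
(i) for `1 ≤ j ≤ q₁ − 1`, `ŝ*_j(n) → s_j²/s_{j+1}² − 1` (with `s_j = λ_{1j}/(1+λ_{1j})`);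
(ii) `ŝ*_{q₁}(n) → +∞`;
(iii) for `q₁ + 1 ≤ j ≤ q − 1`, `ŝ*_j(n) → μ_j²/μ_{j+1}² − 1`;
(iv) `ŝ*_q(n) → +∞`;
(v) for `q + 1 ≤ j ≤ p − 1`, `ŝ*_j(n) → 0`. -/
theorem sStar_limits_local_models (q₁ q p : ℕ)
    (hq₁ : 1 ≤ q₁) (hq₁q : q₁ < q) (hpq : q + 2 ≤ p)
    (lam1 : ℕ → ℝ)
    (hlam1dec : ∀ i j, 1 ≤ i → i ≤ j → j ≤ q₁ → lam1 j ≤ lam1 i)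
    (hlam1pos : 0 < lam1 q₁)
    (mu : ℕ → ℝ)
    (hmu1dec : ∀ i j, 1 ≤ i → i ≤ j → j ≤ q₁ → mu j ≤ mu i)
    (hmu1nn : 0 ≤ mu q₁)
    (hmu2dec : ∀ i j, q₁ + 1 ≤ i → i ≤ j → j ≤ q → mu j ≤ mu i)
    (hmu2pos : 0 < mu q)
    (α : ℝ) (hα0 : 0 < α) (hα1 : α < 1 / 2)
    (lamhat : ℕ → ℕ → ℝ)
    (hnn : ∀ n j, 1 ≤ j → j ≤ p → 0 ≤ lamhat n j)
    (K : ℝ)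
    (hrate1 : ∀ n, 1 ≤ n → ∀ i, 1 ≤ i → i ≤ q₁ →
      |lamhat n i - lam1 i - Cseq α n * mu i| ≤ K * rhoSeq α n)
    (hrate2 : ∀ n, 1 ≤ n → ∀ i, q₁ < i → i ≤ q →
      |lamhat n i - Cseq α n * mu i| ≤ K * rhoSeq α n)
    (hrate3 : ∀ n, 1 ≤ n → ∀ i, q < i → i ≤ p → |lamhat n i| ≤ K * rhoSeq α n)
    (c1 : ℕ → ℝ) (hc1pos : ∀ n, 0 < c1 n)
    (hc1C2 : Tendsto (fun n => c1 n / (Cseq α n) ^ 2) atTop (nhds 0))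
    (hnc1 : Tendsto (fun n : ℕ => (n : ℝ) * c1 n) atTop atTop)
    (hc1C4 : Tendsto (fun n => c1 n / (Cseq α n) ^ 4) atTop atTop) :
    (∀ j, 1 ≤ j → j ≤ q₁ - 1 →
      Tendsto (fun n => sStar (lamhat n) (c1 n) j) atTop
        (nhds ((sHat lam1 j) ^ 2 / (sHat lam1 (j + 1)) ^ 2 - 1))) ∧
    Tendsto (fun n => sStar (lamhat n) (c1 n) q₁) atTop atTop ∧
    (∀ j, q₁ + 1 ≤ j → j ≤ q - 1 →
      Tendsto (fun n => sStar (lamhat n) (c1 n) j) atTop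
        (nhds ((mu j) ^ 2 / (mu (j + 1)) ^ 2 - 1))) ∧
    Tendsto (fun n => sStar (lamhat n) (c1 n) q) atTop atTop ∧
    (∀ j, q + 1 ≤ j → j ≤ p - 1 →
      Tendsto (fun n => sStar (lamhat n) (c1 n) j) atTop (nhds 0)) := by
  have hCpos : ∀ n : ℕ, 1 ≤ n → 0 < Cseq α n := fun n hn =>
    Real.rpow_pos_of_pos (by exact_mod_cast hn) _
  have hC0 : Tendsto (fun n : ℕ => Cseq α n) atTop (nhds 0) :=
    (tendsto_rpow_neg_atTop hα0).comp tendsto_natCast_atTop_atTop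
  have hC20 : Tendsto (fun n : ℕ => (Cseq α n) ^ 2) atTop (nhds 0) := by
    simpa using hC0.pow 2
  have h1sqrt : Tendsto (fun n : ℕ => 1 / Real.sqrt n) atTop (nhds 0) := by
    have h := (tendsto_rpow_neg_atTop (by norm_num : (0:ℝ) < 1/2)).comp
      tendsto_natCast_atTop_atTop
    refine h.congr fun n => ?_
    simp only [Function.comp_apply]
    rw [Real.rpow_neg (Nat.cast_nonneg n), Real.sqrt_eq_rpow]
    exact (one_div _).symm
  have hrho0 : Tendsto (fun n : ℕ => rhoSeq α n) atTop (nhds 0) := by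
    simpa [rhoSeq] using hC20.max h1sqrt
  have hKrho0 : Tendsto (fun n : ℕ => K * rhoSeq α n) atTop (nhds 0) := by
    simpa using hrho0.const_mul K
  have hrhoC : Tendsto (fun n : ℕ => rhoSeq α n / Cseq α n) atTop (nhds 0) := by
    have hb : Tendsto (fun n : ℕ => (n:ℝ) ^ (-(1/2 - α))) atTop (nhds 0) :=
      (tendsto_rpow_neg_atTop (by linarith)).comp tendsto_natCast_atTop_atTop
    have hmax : Tendsto (fun n : ℕ => max (Cseq α n) ((n:ℝ) ^ (-(1/2 - α)))) atTop
        (nhds 0) := by simpa using hC0.max hb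
    refine Tendsto.congr' ?_ hmax
    filter_upwards [eventually_ge_atTop 1] with n hn
    have hn0 : (0:ℝ) < n := by exact_mod_cast hn
    have hC := hCpos n hn
    have h1 : Cseq α n ^ 2 / Cseq α n = Cseq α n := by
      rw [pow_two, mul_div_assoc, div_self hC.ne', mul_one]
    have h2' : Real.sqrt n * Cseq α n = (n:ℝ) ^ ((1:ℝ)/2 - α) := by
      rw [Real.sqrt_eq_rpow, Cseq, ← Real.rpow_add hn0]
      ring_nf
    have h2 : (1 / Real.sqrt n) / Cseq α n = (n:ℝ) ^ (-(1/2 - α)) := by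
      rw [div_div, h2', Real.rpow_neg hn0.le, one_div]
    rw [rhoSeq, ← max_div_div_right hC.le, h1, h2]
  have hc10 : Tendsto c1 atTop (nhds 0) := by
    refine Tendsto.congr' ?_ (by simpa using hc1C2.mul hC20)
    filter_upwards [eventually_ge_atTop 1] with n hn
    exact div_mul_cancel₀ _ (pow_ne_zero 2 (hCpos n hn).ne')
  have hCC4 : Tendsto (fun n => Cseq α n ^ 4 / c1 n) atTop (nhds 0) := by
    refine Tendsto.congr (fun n => ?_) hc1C4.inv_tendsto_atTop
    simp [inv_div]
  have hnc1inv : Tendsto (fun n : ℕ => ((n:ℝ) * c1 n)⁻¹) atTop (nhds 0) := by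
    exact hnc1.inv_tendsto_atTop
  -- limits of lamhat
  have hlimA : ∀ i, 1 ≤ i → i ≤ q₁ →
      Tendsto (fun n => lamhat n i) atTop (nhds (lam1 i)) := by
    intro i h1 h2
    refine tendsto_of_abs_sub_le' (g := fun n => lam1 i + Cseq α n * mu i) ?_ hKrho0 ?_
    · filter_upwards [eventually_ge_atTop 1] with n hn
      simpa [sub_add_eq_sub_sub] using hrate1 n hn i h1 h2
    · simpa using tendsto_const_nhds.add (hC0.mul (tendsto_const_nhds (x := mu i)))
  have hlimB : ∀ i, q₁ < i → i ≤ q →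
      Tendsto (fun n => lamhat n i) atTop (nhds 0) := by
    intro i h1 h2
    refine tendsto_of_abs_sub_le' (g := fun n => Cseq α n * mu i) ?_ hKrho0 ?_
    · filter_upwards [eventually_ge_atTop 1] with n hn
      exact hrate2 n hn i h1 h2
    · simpa using hC0.mul (tendsto_const_nhds (x := mu i))
  -- limits of sHat
  have hsHatA : ∀ i, 1 ≤ i → i ≤ q₁ →
      Tendsto (fun n => sHat (lamhat n) i) atTop (nhds (sHat lam1 i)) := by
    intro i h1 h2
    have hpos : 0 < lam1 i := lt_of_lt_of_le hlam1pos (hlam1dec i q₁ h1 h2 le_rfl)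
    have h := hlimA i h1 h2
    have := h.div (tendsto_const_nhds.add h) (by linarith : (1:ℝ) + lam1 i ≠ 0)
    simpa [sHat, Pi.div_def] using this
  have hsHat0 : ∀ i : ℕ, Tendsto (fun n => lamhat n i) atTop (nhds 0) →
      Tendsto (fun n => sHat (lamhat n) i) atTop (nhds 0) := by
    intro i h
    have := h.div (tendsto_const_nhds.add h) (by norm_num : (1:ℝ) + 0 ≠ 0)
    simpa [sHat, Pi.div_def] using this
  have hsC : ∀ i, q₁ < i → i ≤ q →
      Tendsto (fun n => sHat (lamhat n) i / Cseq α n) atTop (nhds (mu i)) := by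
    intro i h1 h2
    have hl0 := hlimB i h1 h2
    have hdiv : Tendsto (fun n => lamhat n i / Cseq α n) atTop (nhds (mu i)) := by
      refine tendsto_of_abs_sub_le' (g := fun _ => mu i)
        (h := fun n => K * (rhoSeq α n / Cseq α n)) ?_ ?_ tendsto_const_nhds
      · filter_upwards [eventually_ge_atTop 1] with n hn
        have hC := hCpos n hn
        have hb := hrate2 n hn i h1 h2
        have heq : lamhat n i / Cseq α n - mu i
            = (lamhat n i - Cseq α n * mu i) / Cseq α n := by
          field_simp
        rw [heq, abs_div, abs_of_pos hC, ← mul_div_assoc]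
        exact (div_le_div_iff_of_pos_right hC).mpr hb
      · simpa using hrhoC.const_mul K
    have hmul := hdiv.mul ((tendsto_const_nhds.add hl0).inv₀
      (by norm_num : (1:ℝ) + 0 ≠ 0))
    have h2' : Tendsto (fun n => lamhat n i / Cseq α n * (1 + lamhat n i)⁻¹) atTop
        (nhds (mu i)) := by simpa using hmul
    refine h2'.congr fun n => ?_
    simp only [sHat, div_eq_mul_inv]
    ring
  -- nonnegativity / upper bound for sHat at tail indices
  have hsbound : ∀ n, 1 ≤ n → ∀ i, q < i → i ≤ p →
      0 ≤ sHat (lamhat n) i ∧ sHat (lamhat n) i ≤ K * rhoSeq α n := by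
    intro n hn i hi1 hi2
    have hl := hnn n i (by omega) hi2
    constructor
    · exact div_nonneg hl (by linarith)
    · calc sHat (lamhat n) i ≤ lamhat n i := div_le_self hl (by linarith)
        _ ≤ |lamhat n i| := le_abs_self _
        _ ≤ K * rhoSeq α n := hrate3 n hn i hi1 hi2
  refine ⟨?_, ?_, ?_, ?_, ?_⟩
  · -- (i)
    intro j hj1 hj2
    have hj1q : j + 1 ≤ q₁ := by omega
    have hsj := hsHatA j hj1 (by omega)
    have hsj1 := hsHatA (j+1) (by omega) hj1q
    have hpos1 : 0 < lam1 (j+1) :=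
      lt_of_lt_of_le hlam1pos (hlam1dec (j+1) q₁ (by omega) hj1q le_rfl)
    have hspos : 0 < sHat lam1 (j+1) := div_pos hpos1 (by linarith)
    have hne : (sHat lam1 (j+1)) ^ 2 + 0 ≠ 0 := by
      simpa using (pow_pos hspos 2).ne'
    have h := (((hsj.pow 2).add hc10).div ((hsj1.pow 2).add hc10) hne).sub
      (tendsto_const_nhds (x := (1:ℝ)))
    simpa [sStar] using h
  · -- (ii)
    have hsq1 := hsHatA q₁ hq₁ le_rfl
    have hs0 := hsHat0 (q₁+1) (hlimB (q₁+1) (by omega) (by omega))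
    have hN : Tendsto (fun n => sHat (lamhat n) q₁ ^ 2 + c1 n) atTop
        (nhds (sHat lam1 q₁ ^ 2)) := by simpa using (hsq1.pow 2).add hc10
    have hD0 : Tendsto (fun n => sHat (lamhat n) (q₁+1) ^ 2 + c1 n) atTop (nhds 0) := by
      simpa using (hs0.pow 2).add hc10
    have hDin : Tendsto (fun n => sHat (lamhat n) (q₁+1) ^ 2 + c1 n) atTop
        (nhdsWithin 0 (Set.Ioi 0)) := by
      refine tendsto_nhdsWithin_iff.mpr ⟨hD0, Eventually.of_forall fun n => ?_⟩
      exact Set.mem_Ioi.mpr (add_pos_of_nonneg_of_pos (sq_nonneg _) (hc1pos n))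
    have hinv : Tendsto (fun n => (sHat (lamhat n) (q₁+1) ^ 2 + c1 n)⁻¹) atTop atTop := by
      exact hDin.inv_tendsto_nhdsGT_zero
    have hspos : 0 < sHat lam1 q₁ ^ 2 := pow_pos (div_pos hlam1pos (by linarith)) 2
    have hratio := Tendsto.pos_mul_atTop hspos hN hinv
    have h := tendsto_atTop_add_const_right atTop (-1 : ℝ) hratio
    refine h.congr fun n => ?_
    rw [sStar, sub_eq_add_neg, div_eq_mul_inv]
  · -- (iii)
    intro j hj1 hj2
    have hj1q : j + 1 ≤ q := by omega
    have hsCj := hsC j (by omega) (by omega)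
    have hsCj1 := hsC (j+1) (by omega) hj1q
    have hmupos : 0 < mu (j+1) :=
      lt_of_lt_of_le hmu2pos (hmu2dec (j+1) q (by omega) hj1q le_rfl)
    have hne : mu (j+1) ^ 2 + 0 ≠ 0 := by simpa using (pow_pos hmupos 2).ne'
    have h := (((hsCj.pow 2).add hc1C2).div ((hsCj1.pow 2).add hc1C2) hne).sub
      (tendsto_const_nhds (x := (1:ℝ)))
    have h' : Tendsto (fun n => ((sHat (lamhat n) j / Cseq α n) ^ 2 + c1 n / Cseq α n ^ 2) /
        ((sHat (lamhat n) (j+1) / Cseq α n) ^ 2 + c1 n / Cseq α n ^ 2) - 1) atTop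
        (nhds (mu j ^ 2 / mu (j+1) ^ 2 - 1)) := by simpa using h
    refine Tendsto.congr' ?_ h'
    filter_upwards [eventually_ge_atTop 1] with n hn
    have hC := hCpos n hn
    have hC2 : Cseq α n ^ 2 ≠ 0 := pow_ne_zero 2 hC.ne'
    have hD : sHat (lamhat n) (j+1) ^ 2 + c1 n ≠ 0 :=
      (add_pos_of_nonneg_of_pos (sq_nonneg _) (hc1pos n)).ne'
    rw [div_pow, div_pow, ← add_div, ← add_div,
      div_div_div_same' hD hC2, sStar]
  · -- (iv)
    have hsCq := hsC q (by omega) le_rfl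
    have hN : Tendsto (fun n => (sHat (lamhat n) q / Cseq α n) ^ 2 + c1 n / Cseq α n ^ 2)
        atTop (nhds (mu q ^ 2)) := by simpa using (hsCq.pow 2).add hc1C2
    have hupper : Tendsto (fun n => K ^ 2 * (rhoSeq α n / Cseq α n) ^ 2) atTop (nhds 0) := by
      simpa using (hrhoC.pow 2).const_mul (K ^ 2)
    have hT : Tendsto (fun n => (sHat (lamhat n) (q+1) / Cseq α n) ^ 2) atTop (nhds 0) := by
      refine tendsto_of_tendsto_of_tendsto_of_le_of_le' tendsto_const_nhds hupper
        (Eventually.of_forall fun n => sq_nonneg _) ?_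
      filter_upwards [eventually_ge_atTop 1] with n hn
      have hC := hCpos n hn
      obtain ⟨hs0, hs1⟩ := hsbound n hn (q+1) (by omega) (by omega)
      have hdiv : sHat (lamhat n) (q+1) / Cseq α n ≤ K * rhoSeq α n / Cseq α n :=
        (div_le_div_iff_of_pos_right hC).mpr hs1
      have h0 : 0 ≤ sHat (lamhat n) (q+1) / Cseq α n := div_nonneg hs0 hC.le
      calc (sHat (lamhat n) (q+1) / Cseq α n) ^ 2 ≤ (K * rhoSeq α n / Cseq α n) ^ 2 :=
            pow_le_pow_left₀ h0 hdiv 2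
        _ = K ^ 2 * (rhoSeq α n / Cseq α n) ^ 2 := by rw [mul_div_assoc, mul_pow]
    have hD0 : Tendsto (fun n => (sHat (lamhat n) (q+1) / Cseq α n) ^ 2 + c1 n / Cseq α n ^ 2)
        atTop (nhds 0) := by simpa using hT.add hc1C2
    have hDin : Tendsto (fun n => (sHat (lamhat n) (q+1) / Cseq α n) ^ 2 + c1 n / Cseq α n ^ 2)
        atTop (nhdsWithin 0 (Set.Ioi 0)) := by
      refine tendsto_nhdsWithin_iff.mpr ⟨hD0, ?_⟩
      filter_upwards [eventually_ge_atTop 1] with n hn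
      exact Set.mem_Ioi.mpr (add_pos_of_nonneg_of_pos (sq_nonneg _)
        (div_pos (hc1pos n) (pow_pos (hCpos n hn) 2)))
    have hinv : Tendsto (fun n => ((sHat (lamhat n) (q+1) / Cseq α n) ^ 2
        + c1 n / Cseq α n ^ 2)⁻¹) atTop atTop := by
      exact hDin.inv_tendsto_nhdsGT_zero
    have hratio := Tendsto.pos_mul_atTop (pow_pos hmu2pos 2) hN hinv
    have h := tendsto_atTop_add_const_right atTop (-1 : ℝ) hratio
    refine Tendsto.congr' ?_ h
    filter_upwards [eventually_ge_atTop 1] with n hn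
    have hC := hCpos n hn
    have hC2 : Cseq α n ^ 2 ≠ 0 := pow_ne_zero 2 hC.ne'
    have hD : sHat (lamhat n) (q+1) ^ 2 + c1 n ≠ 0 :=
      (add_pos_of_nonneg_of_pos (sq_nonneg _) (hc1pos n)).ne'
    rw [← div_eq_mul_inv, div_pow, div_pow, ← add_div, ← add_div,
      div_div_div_same' hD hC2, ← sub_eq_add_neg, sStar]
  · -- (v)
    intro j hj1 hj2
    have key : ∀ i, q < i → i ≤ p →
        Tendsto (fun n => sHat (lamhat n) i ^ 2 / c1 n) atTop (nhds 0) := by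
      intro i hi1 hi2
      have hg : Tendsto (fun n => K ^ 2 * (Cseq α n ^ 4 / c1 n + ((n:ℝ) * c1 n)⁻¹)) atTop
          (nhds 0) := by simpa using (hCC4.add hnc1inv).const_mul (K ^ 2)
      refine tendsto_of_tendsto_of_tendsto_of_le_of_le' tendsto_const_nhds hg
        (Eventually.of_forall fun n => div_nonneg (sq_nonneg _) (hc1pos n).le) ?_
      filter_upwards [eventually_ge_atTop 1] with n hn
      have hc := hc1pos n
      have hn0 : (0:ℝ) < n := by exact_mod_cast hn
      obtain ⟨hs0, hs1⟩ := hsbound n hn i hi1 hi2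
      have h2 : sHat (lamhat n) i ^ 2 ≤ K ^ 2 * rhoSeq α n ^ 2 := by
        have := pow_le_pow_left₀ hs0 hs1 2
        simpa [mul_pow] using this
      have h3 : rhoSeq α n ^ 2 ≤ Cseq α n ^ 4 + 1 / (n:ℝ) := by
        have hinv : (0:ℝ) ≤ 1 / (n:ℝ) := by positivity
        have hC4 : (0:ℝ) ≤ Cseq α n ^ 4 := by positivity
        have hsq : (Cseq α n ^ 2) ^ 2 = Cseq α n ^ 4 := by ring
        rcases max_cases (Cseq α n ^ 2) (1 / Real.sqrt n) with ⟨h, _⟩ | ⟨h, _⟩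
        · rw [rhoSeq, h, hsq]; linarith
        · rw [rhoSeq, h, div_pow, one_pow, Real.sq_sqrt hn0.le]; linarith
      have h4 : sHat (lamhat n) i ^ 2 / c1 n
          ≤ K ^ 2 * (Cseq α n ^ 4 + 1 / (n:ℝ)) / c1 n := by
        apply (div_le_div_iff_of_pos_right hc).mpr
        calc sHat (lamhat n) i ^ 2 ≤ K ^ 2 * rhoSeq α n ^ 2 := h2
          _ ≤ K ^ 2 * (Cseq α n ^ 4 + 1 / (n:ℝ)) :=
              mul_le_mul_of_nonneg_left h3 (sq_nonneg K)
      refine h4.trans (le_of_eq ?_)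
      field_simp
    have hkj := key j (by omega) (by omega)
    have hkj1 := key (j+1) (by omega) (by omega)
    have h := ((hkj.add (tendsto_const_nhds (x := (1:ℝ)))).div
      (hkj1.add (tendsto_const_nhds (x := (1:ℝ)))) (by norm_num)).sub
      (tendsto_const_nhds (x := (1:ℝ)))
    have h' : Tendsto (fun n => (sHat (lamhat n) j ^ 2 / c1 n + 1) /
        (sHat (lamhat n) (j+1) ^ 2 / c1 n + 1) - 1) atTop (nhds 0) := by
      simpa using h
    refine h'.congr fun n => ?_
    have hc := (hc1pos n).ne'
    have hD : sHat (lamhat n) (j+1) ^ 2 + c1 n ≠ 0 :=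
      (add_pos_of_nonneg_of_pos (sq_nonneg _) (hc1pos n)).ne'
    have e : ∀ x : ℝ, (x + c1 n) / c1 n = x / c1 n + 1 := fun x => by
      rw [add_div, div_self hc]
    rw [← e, ← e, div_div_div_same' hD hc, sStar]
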